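/- For all ordinals α ≤ β, the level N_α of the N-hierarchy is a transitive set, and N_α ⊆ N_β. -/

import Mathlib

namespace NairianModels

open ZFSet

/-! ## Basic cardinality notions -/

/-- `f` codes a surjection from `X` onto `Y`: a set of Kuratowski ordered pairs that is a
function with domain `X` and values in `Y`, every element of `Y` being a value. -/
def ZFSurj (X Y f : ZFSet) : Prop :=
  ZFSet.IsFunc X Y f ∧ ∀ y ∈ Y, ∃ x ∈ X, ZFSet.pair x y ∈ f

/-- `|X| ≲ |Y|`: either `X = ∅` or there is a surjection from `Y` onto `X`. -/
def CardLE (X Y : ZFSet) : Prop :=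
  X = ∅ ∨ ∃ f, ZFSurj Y X f

/-- `|X| ≈ |Y|`. -/
def CardEq (X Y : ZFSet) : Prop :=
  CardLE X Y ∧ CardLE Y X

/-- `X` is a maximal cardinality of `M`: `X ∈ M` and every nonempty `Y ∈ M` is the image of a
surjection from `X` that belongs to `M`. -/
def IsMaxCard (X M : ZFSet) : Prop :=
  X ∈ M ∧ ∀ Y ∈ M, Y = ∅ ∨ ∃ f ∈ M, ZFSurj X Y f

/-- `M` is of successor type: it has a maximal cardinality. -/
def SuccType (M : ZFSet) : Prop :=
  ∃ X, IsMaxCard X M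

/-! ## Fullness -/

def TransClosed (M : ZFSet) : Prop :=
  ∀ Y ∈ M, ∃ Z ∈ M, Z.IsTransitive ∧ Z ⊆ M ∧ Y ∈ Z

def ProdClosed (M : ZFSet) : Prop :=
  ∀ X ∈ M, ∀ Y ∈ M, ZFSet.prod X Y ∈ M

def SubsetClosed (M : ZFSet) : Prop :=
  ∀ X ∈ M, ZFSet.powerset X ⊆ M

def Full (M : ZFSet) : Prop :=
  TransClosed M ∧ ProdClosed M ∧ SubsetClosed M

/-! ## Ordinals, strong regularity, hierarchicality, H-likeness -/

/-- von Neumann ordinal: a transitive set linearly ordered by `∈`. -/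
def IsOrd (x : ZFSet) : Prop :=
  x.IsTransitive ∧
    (∀ y ∈ x, ∀ z ∈ x, y ∈ z ∨ y = z ∨ z ∈ y) ∧
    (∀ a ∈ x, ∀ b ∈ x, ∀ c ∈ x, a ∈ b → b ∈ c → a ∈ c)

/-- limit (von Neumann) ordinal: a nonempty ordinal with no largest element. -/
def IsLimitOrd (x : ZFSet) : Prop :=
  IsOrd x ∧ x ≠ ∅ ∧ ∀ y ∈ x, ∃ z ∈ x, y ∈ z

/-- `M` is strongly regular: any (set-coded) function from an `X ∈ M` to the ordinals
belonging to `M` is bounded by an ordinal in `M`. -/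
def StronglyRegular (M : ZFSet) : Prop :=
  ∀ X ∈ M, ∀ f : ZFSet,
    (∀ p ∈ f, ∃ x ∈ X, ∃ o, IsOrd o ∧ o ∈ M ∧ p = ZFSet.pair x o) →
    (∀ x ∈ X, ∃ o, ZFSet.pair x o ∈ f) →
    (∀ x ∈ X, ∀ o o', ZFSet.pair x o ∈ f → ZFSet.pair x o' ∈ f → o = o') →
    ∃ β, IsOrd β ∧ β ∈ M ∧ ∀ x ∈ X, ∀ o, ZFSet.pair x o ∈ f → o ∈ β

/-- `M` is hierarchical: it is the continuous increasing union, along the ordinals belonging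
to `M`, of transitive sets belonging to `M`. -/
def Hierarchical (M : ZFSet) : Prop :=
  ∃ F : ZFSet → ZFSet,
    (∀ α, IsOrd α → α ∈ M → (F α).IsTransitive ∧ F α ∈ M) ∧
    (∀ α β, IsOrd α → IsOrd β → α ∈ M → β ∈ M → α ∈ β → F α ⊆ F β) ∧
    (∀ β, IsLimitOrd β → β ∈ M → ∀ x, x ∈ F β ↔ ∃ α ∈ β, x ∈ F α) ∧
    (∀ x, x ∈ M ↔ ∃ α, IsOrd α ∧ α ∈ M ∧ x ∈ F α)

/-- `M` is H-like: transitive, full, hierarchical, and strongly regular in case it is of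
successor type. -/
def HLike (M : ZFSet) : Prop :=
  M.IsTransitive ∧ Full M ∧ Hierarchical M ∧ (SuccType M → StronglyRegular M)

/-! ## Transitive closure and the classes `H_X` -/

/-- Iterated unions: `iterUnion x n = ⋃ⁿ x`. -/
def iterUnion (x : ZFSet) : ℕ → ZFSet
  | 0 => x
  | n + 1 => ZFSet.sUnion (iterUnion x n)

/-- The transitive closure of `x` (the least transitive set including `x`):
`x ∪ ⋃x ∪ ⋃⋃x ∪ ⋯`. -/
noncomputable def transCl (x : ZFSet) : ZFSet :=
  ZFSet.sUnion (ZFSet.range fun n : ℕ => iterUnion x n)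

/-- `Y ∈ H_X`: there is a surjection from `X` onto the transitive closure of `{Y}`. -/
def MemH (X Y : ZFSet) : Prop :=
  ∃ f, ZFSurj X (transCl ({Y} : ZFSet)) f

/-! ## First-order logic over `(W, ∈)` -/

/-- Formulas of the language of set theory, with variables indexed by `ℕ`. -/
inductive Fml : Type
  | mem : ℕ → ℕ → Fml
  | equal : ℕ → ℕ → Fml
  | not : Fml → Fml
  | and : Fml → Fml → Fml
  | ex : ℕ → Fml → Fml

/-- Satisfaction of a formula in the structure `(D, ∈)` under the assignment `v`. -/
def Sat (D : ZFSet) : Fml → (ℕ → ZFSet) → Prop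
  | .mem i j, v => v i ∈ v j
  | .equal i j, v => v i = v j
  | .not φ, v => ¬ Sat D φ v
  | .and φ ψ, v => Sat D φ v ∧ Sat D ψ v
  | .ex n φ, v => ∃ a, a ∈ D ∧ Sat D φ (Function.update v n a)

/-- `(X, ∈)` is an elementary substructure of `(W, ∈)`. -/
def ElemSub (X W : ZFSet) : Prop :=
  X ⊆ W ∧ ∀ (φ : Fml) (v : ℕ → ZFSet), (∀ n, v n ∈ X) → (Sat X φ v ↔ Sat W φ v)

/-- `π` is an elementary embedding of `(M, ∈)` into `(W, ∈)`. -/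
def IsElemEmb (M W : ZFSet) (π : ZFSet → ZFSet) : Prop :=
  (∀ x ∈ M, π x ∈ W) ∧
    ∀ (φ : Fml) (v : ℕ → ZFSet), (∀ n, v n ∈ M) →
      (Sat M φ v ↔ Sat W φ fun n => π (v n))

/-- `M` is `X`-closed: `X ∪ {X} ⊆ M` and every (set-coded) function from `X` into `M`
belongs to `M`. -/
def XClosed (X M : ZFSet) : Prop :=
  X ⊆ M ∧ X ∈ M ∧ ∀ f, ZFSet.IsFunc X M f → f ∈ M

/-- `M` is definably closed: any subset of a transitive `N ∈ M` definable over `(N, ∈)` with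
parameters in `N` belongs to `M`. -/
def DefClosed (M : ZFSet) : Prop :=
  ∀ N, N ∈ M → N.IsTransitive →
    ∀ (φ : Fml) (v : ℕ → ZFSet), (∀ n, v n ∈ N) →
      ∀ A : ZFSet, (∀ y, y ∈ A ↔ y ∈ N ∧ Sat N φ (Function.update v 0 y)) → A ∈ M

/-- The reflection principle `ref(X, Y, Z)`. -/
def Ref (X Y Z : ZFSet) : Prop :=
  ∀ W a : ZFSet, W.IsTransitive → XClosed X W → Y ∈ W → a ∈ W →
    ∃ (M : ZFSet) (π : ZFSet → ZFSet),
      M.IsTransitive ∧ IsElemEmb M W π ∧ ({X, Y} : ZFSet) ∈ M ∧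
      (∃ x ∈ M, π x = a) ∧ M ∈ Z ∧
      (∀ z, z ∈ X ∨ z ∈ Y ∨ z = X ∨ z = Y → π z = z) ∧ XClosed X M

/-! ## The N-hierarchy -/

/-- Hereditarily finite sets. -/
def HFin : ZFSet → Prop :=
  ZFSet.mem_wf.fix (C := fun _ => Prop) fun x IH =>
    x.toSet.Finite ∧ ∀ y, ∀ h : y ∈ x, IH y h

/-- `F` is the N-hierarchy: `F 0` is the set of hereditarily finite sets, `F 1 = H_{F 0}`,
`F (α+2) = H_{F (α+1)}`, and for limit `α`, `F α = ⋃_{β<α} F β` and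
`F (α+1) = H_{𝒫(F α)}`. -/
def IsNHierarchy (F : Ordinal → ZFSet) : Prop :=
  (∀ Y, Y ∈ F 0 ↔ HFin Y) ∧
  (∀ Y, Y ∈ F 1 ↔ MemH (F 0) Y) ∧
  (∀ α : Ordinal, ∀ Y, Y ∈ F (α + 2) ↔ MemH (F (α + 1)) Y) ∧
  (∀ α : Ordinal, Order.IsSuccLimit α →
    (∀ Y, Y ∈ F α ↔ ∃ β < α, Y ∈ F β) ∧
    (∀ Y, Y ∈ F (α + 1) ↔ MemH (ZFSet.powerset (F α)) Y))

/-! ## Auxiliary product constructions -/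

/-- Left-nested cartesian product `Y 0 × Y 1 × ⋯ × Y n`. -/
def nestedProd (Y : ℕ → ZFSet) : ℕ → ZFSet
  | 0 => Y 0
  | n + 1 => ZFSet.prod (nestedProd Y n) (Y (n + 1))

/-- Left-nested cartesian power `X^n` (with junk value `∅` at `n = 0`). -/
def nPow (X : ZFSet) : ℕ → ZFSet
  | 0 => ∅
  | 1 => X
  | n + 2 => ZFSet.prod (nPow X (n + 1)) X

/-- `W` is `<κ`-closed: every function from an ordinal `η < κ` into `W` belongs to `W`. -/
def LtClosed (κ W : ZFSet) : Prop :=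
  ∀ η ∈ κ, ∀ f, ZFSet.IsFunc η W f → f ∈ W

/-! ## Auxiliary lemmas for Statement 9 -/

lemma iterUnion_subset {x M : ZFSet} (hM : M.IsTransitive) (hx : x ⊆ M) :
    ∀ n, iterUnion x n ⊆ M
  | 0 => hx
  | n + 1 => by
    intro z hz
    rw [iterUnion] at hz
    obtain ⟨y, hy, hzy⟩ := ZFSet.mem_sUnion.1 hz
    exact hM.mem_trans hzy (iterUnion_subset hM hx n hy)

lemma subset_transCl (x : ZFSet) : x ⊆ transCl x := by
  intro y hy
  exact ZFSet.mem_sUnion.2 ⟨iterUnion x 0, ZFSet.mem_range.2 ⟨0, rfl⟩, hy⟩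

lemma transCl_transitive (x : ZFSet) : (transCl x).IsTransitive := by
  intro y hy z hz
  obtain ⟨w, hw, hyw⟩ := ZFSet.mem_sUnion.1 hy
  obtain ⟨n, rfl⟩ := ZFSet.mem_range.1 hw
  refine ZFSet.mem_sUnion.2 ⟨iterUnion x (n + 1), ZFSet.mem_range.2 ⟨n + 1, rfl⟩, ?_⟩
  exact ZFSet.mem_sUnion.2 ⟨y, hyw, hz⟩

lemma transCl_subset {x M : ZFSet} (hM : M.IsTransitive) (hx : x ⊆ M) :
    transCl x ⊆ M := by
  intro z hz
  obtain ⟨w, hw, hzw⟩ := ZFSet.mem_sUnion.1 hz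
  obtain ⟨n, rfl⟩ := ZFSet.mem_range.1 hw
  exact iterUnion_subset hM hx n hzw

lemma surj_of_subset {M T t0 : ZFSet} (hT : T ⊆ M) (ht0 : t0 ∈ T) :
    ∃ f, ZFSurj M T f := by
  classical
  letI : ZFSet.Definable₁ (fun x => if x ∈ T then x else t0) :=
    Classical.allZFSetDefinable _
  refine ⟨ZFSet.map (fun x => if x ∈ T then x else t0) M, ?_, ?_⟩
  · refine ZFSet.map_isFunc.2 fun z _ => ?_
    by_cases h : z ∈ T
    · simp [h]
    · simpa [h] using ht0
  · intro y hy
    refine ⟨y, hT hy, ?_⟩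
    have : ZFSet.pair y (if y ∈ T then y else t0) ∈
        ZFSet.map (fun x => if x ∈ T then x else t0) M :=
      ZFSet.mem_map.2 ⟨y, hT hy, rfl⟩
    simpa [hy] using this

lemma surj_subset {M T S f s0 : ZFSet} (hf : ZFSurj M T f) (hS : S ⊆ T)
    (hs0 : s0 ∈ S) : ∃ g, ZFSurj M S g := by
  classical
  set h : ZFSet → ZFSet :=
    fun x => if hx : ∃ y, y ∈ S ∧ ZFSet.pair x y ∈ f then hx.choose else s0 with hh
  letI : ZFSet.Definable₁ h := Classical.allZFSetDefinable _
  refine ⟨ZFSet.map h M, ZFSet.map_isFunc.2 fun z _ => ?_, fun y hy => ?_⟩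
  · by_cases hx : ∃ y, y ∈ S ∧ ZFSet.pair z y ∈ f
    · simp only [hh, dif_pos hx]
      exact hx.choose_spec.1
    · simp only [hh, dif_neg hx]
      exact hs0
  · obtain ⟨x, hxM, hxy⟩ := hf.2 y (hS hy)
    have hx : ∃ y', y' ∈ S ∧ ZFSet.pair x y' ∈ f := ⟨y, hy, hxy⟩
    have hval : h x = y := by
      obtain ⟨w, _, hw2⟩ := hf.1.2 x hxM
      rw [hh]
      simp only [dif_pos hx]
      rw [hw2 _ hx.choose_spec.2, hw2 _ hxy]
    have hmem : ZFSet.pair x (h x) ∈ ZFSet.map h M := ZFSet.mem_map.2 ⟨x, hxM, rfl⟩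
    rw [hval] at hmem
    exact ⟨x, hxM, hmem⟩

lemma memH_of_mem {M Y : ZFSet} (hM : M.IsTransitive) (hY : Y ∈ M) : MemH M Y := by
  have h1 : ({Y} : ZFSet) ⊆ M := by
    intro z hz
    rw [ZFSet.mem_singleton] at hz
    subst hz; exact hY
  exact surj_of_subset (transCl_subset hM h1)
    (subset_transCl _ (ZFSet.mem_singleton.2 rfl))

lemma memH_mem {X Z Y : ZFSet} (h : MemH X Z) (hY : Y ∈ Z) : MemH X Y := by
  obtain ⟨f, hf⟩ := h
  have hZ : Z ∈ transCl ({Z} : ZFSet) :=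
    subset_transCl _ (ZFSet.mem_singleton.2 rfl)
  have hYt : Y ∈ transCl ({Z} : ZFSet) := (transCl_transitive _).mem_trans hY hZ
  have hsub : transCl ({Y} : ZFSet) ⊆ transCl ({Z} : ZFSet) := by
    refine transCl_subset (transCl_transitive _) ?_
    intro z hz
    rw [ZFSet.mem_singleton] at hz
    subst hz; exact hYt
  exact surj_subset hf hsub (subset_transCl _ (ZFSet.mem_singleton.2 rfl))

lemma hfin_mem {x y : ZFSet} (hx : HFin x) (hy : y ∈ x) : HFin y := by
  have hfix := ZFSet.mem_wf.fix_eq (C := fun _ => Prop)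
    (fun x IH => x.toSet.Finite ∧ ∀ y, ∀ h : y ∈ x, IH y h) x
  unfold HFin at hx ⊢
  rw [hfix] at hx
  exact hx.2 y hy

/-! ## Statement 9 -/

theorem stmt9 (F : Ordinal → ZFSet) (hF : IsNHierarchy F) :
    ∀ α β : Ordinal, α ≤ β → (F α).IsTransitive ∧ F α ⊆ F β := by
  obtain ⟨h0, h1, h2, hlim⟩ := hF
  have hH : ∀ X W : ZFSet, (∀ Y, Y ∈ W ↔ MemH X Y) → W.IsTransitive := by
    intro X W hW Z hZ Y hY
    exact (hW Y).2 (memH_mem ((hW Z).1 hZ) hY)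
  -- every level is transitive
  have htrans : ∀ γ : Ordinal, (F γ).IsTransitive := by
    intro γ
    induction γ using Ordinal.induction with
    | _ γ IH =>
      rcases Ordinal.zero_or_succ_or_isSuccLimit γ with rfl | ⟨α, rfl⟩ | hγ
      · intro Z hZ Y hY
        exact (h0 Y).2 (hfin_mem ((h0 Z).1 hZ) hY)
      · rw [← Ordinal.add_one_eq_succ]
        rcases Ordinal.zero_or_succ_or_isSuccLimit α with rfl | ⟨α', rfl⟩ | hα
        · rw [zero_add]
          exact hH _ _ h1
        · rw [← Ordinal.add_one_eq_succ,
            show α' + 1 + 1 = α' + 2 by rw [add_assoc, one_add_one_eq_two]]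
          exact hH _ _ (h2 α')
        · exact hH _ _ (hlim α hα).2
      · intro Z hZ Y hY
        obtain ⟨β, hβ, hZβ⟩ := ((hlim γ hγ).1 Z).1 hZ
        exact ((hlim γ hγ).1 Y).2 ⟨β, hβ, IH β hβ Z hZβ hY⟩
  -- one-step inclusion
  have hstep : ∀ γ : Ordinal, F γ ⊆ F (γ + 1) := by
    intro γ
    rcases Ordinal.zero_or_succ_or_isSuccLimit γ with rfl | ⟨α, rfl⟩ | hγ
    · intro Y hY
      rw [zero_add, h1]
      exact memH_of_mem (htrans 0) hY
    · intro Y hY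
      rw [← Ordinal.add_one_eq_succ] at hY ⊢
      rw [show α + 1 + 1 = α + 2 by rw [add_assoc, one_add_one_eq_two], h2]
      exact memH_of_mem (htrans (α + 1)) hY
    · intro Y hY
      rw [(hlim γ hγ).2]
      have hT := htrans γ
      have hsng : ({Y} : ZFSet) ⊆ F γ := by
        intro z hz
        rw [ZFSet.mem_singleton] at hz
        subst hz; exact hY
      have hsub : transCl ({Y} : ZFSet) ⊆ ZFSet.powerset (F γ) := fun z hz =>
        ZFSet.mem_powerset.2 (hT z (transCl_subset hT hsng hz))
      exact surj_of_subset hsub (subset_transCl _ (ZFSet.mem_singleton.2 rfl))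
  -- monotonicity
  have hmono : ∀ β α : Ordinal, α ≤ β → F α ⊆ F β := by
    intro β
    induction β using Ordinal.induction with
    | _ β IH =>
      intro α hαβ
      rcases eq_or_lt_of_le hαβ with rfl | hlt
      · exact fun _ h => h
      rcases Ordinal.zero_or_succ_or_isSuccLimit β with rfl | ⟨δ, rfl⟩ | hβ
      · exact absurd hlt (by simp : ¬ α < 0)
      · have hle : α ≤ δ := Order.lt_succ_iff.1 hlt
        rw [← Ordinal.add_one_eq_succ]
        exact fun y hy => hstep δ (IH δ (Order.lt_succ δ) α hle hy)
      · intro Y hY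
        exact ((hlim β hβ).1 Y).2 ⟨α, hlt, hY⟩
  exact fun α β h => ⟨htrans α, hmono β α h⟩

end NairianModels
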